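/- Let p̃, q̃ be integers with p̃ ≠ 0 and q̃ ≥ 97·|p̃|, and let u and u′ be two distinct complex roots of the quartic equation u⁴ + 8u² − 12·i·u − 4 = 0. Then the open discs {t ∈ ℂ : |t − c(u)| < 51·|p̃|³/q̃} and {t ∈ ℂ : |t − c(u′)| < 51·|p̃|³/q̃} are disjoint. -/

import Mathlib

set_option maxHeartbeats 1000000

private lemma cabs_add₃ (a b c : ℂ) :
    ‖a + b + c‖ ≤ ‖a‖ + ‖b‖ + ‖c‖ := by
  calc ‖a + b + c‖ ≤ ‖a + b‖ + ‖c‖ :=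
        norm_add_le _ _
    _ ≤ ‖a‖ + ‖b‖ + ‖c‖ := by
        gcongr; exact norm_add_le _ _

private lemma cabs_add₄ (a b c d : ℂ) :
    ‖a + b + c + d‖
      ≤ ‖a‖ + ‖b‖ + ‖c‖ + ‖d‖ := by
  calc ‖a + b + c + d‖ ≤ ‖a + b + c‖ + ‖d‖ :=
        norm_add_le _ _
    _ ≤ ‖a‖ + ‖b‖ + ‖c‖ + ‖d‖ := by
        gcongr; exact cabs_add₃ a b c

/-- Any root of the quartic has absolute value at most `69/20 = 3.45`. -/
lemma quartic_root_abs_le (u : ℂ)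
    (hu : u ^ 4 + 8 * u ^ 2 - 12 * Complex.I * u - 4 = 0) :
    ‖u‖ ≤ 69/20 := by
  set t := ‖u‖ with ht
  have ht0 : 0 ≤ t := norm_nonneg u
  have e : u ^ 4 = -(8 * u ^ 2) + 12 * Complex.I * u + 4 := by linear_combination hu
  have h1 : t ^ 4 ≤ 8 * t ^ 2 + 12 * t + 4 := by
    have h2 : ‖u ^ 4‖ ≤ 8 * t ^ 2 + 12 * t + 4 := by
      rw [e]
      refine le_trans (cabs_add₃ _ _ _) ?_
      simp only [norm_neg, norm_mul, norm_pow, Complex.norm_I]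
      simp [ht]
    simpa [norm_pow, ht] using h2
  nlinarith [sq_nonneg (t - 69/20), sq_nonneg t, sq_nonneg (t^2 - 10)]

/-- Distinct roots of the quartic are at distance at least `117/10000`. -/
lemma quartic_root_sep (u u' : ℂ)
    (hu : u ^ 4 + 8 * u ^ 2 - 12 * Complex.I * u - 4 = 0)
    (hu' : u' ^ 4 + 8 * u' ^ 2 - 12 * Complex.I * u' - 4 = 0)
    (hne : u ≠ u') :
    (117/10000 : ℝ) ≤ ‖u - u'‖ := by
  by_contra hcon
  push_neg at hcon
  set d : ℂ := u - u' with hdd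
  have hd : d ≠ 0 := sub_ne_zero.mpr hne
  have key : d * (688 + d * (704*u^3 + 840*Complex.I*u^2 + 4704*u - 2976*Complex.I)
      - d^2 * (-192*Complex.I*u^3 + 448*u^2 - 720*Complex.I*u + 64)
      + d^3 * (4*u^3 - 48*Complex.I*u^2 + 144*u - 228*Complex.I)) = 0 := by
    rw [hdd]
    linear_combination
      (228*Complex.I - 512*u' + 288*Complex.I*u'^2 - 16*u'^3 + 368*u
        - 384*Complex.I*u*u' + 24*u*u'^2 + 144*Complex.I*u^2 - 16*u^2*u' + 4*u^3) * hu
      + (-228*Complex.I + 144*u - 48*Complex.I*u^2 + 4*u^3) * hu'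
      + (2736*u + 3456*u*u'^2 - 5184*u^2*u' + 1728*u^3 - 2736*u') * Complex.I_sq
  have inner : (688 : ℂ) + d * (704*u^3 + 840*Complex.I*u^2 + 4704*u - 2976*Complex.I)
      - d^2 * (-192*Complex.I*u^3 + 448*u^2 - 720*Complex.I*u + 64)
      + d^3 * (4*u^3 - 48*Complex.I*u^2 + 144*u - 228*Complex.I) = 0 :=
    (mul_eq_zero.mp key).resolve_left hd
  have e : (688 : ℂ) = d * (-(704*u^3 + 840*Complex.I*u^2 + 4704*u - 2976*Complex.I)
      + d * (-192*Complex.I*u^3 + 448*u^2 - 720*Complex.I*u + 64)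
      - d^2 * (4*u^3 - 48*Complex.I*u^2 + 144*u - 228*Complex.I)) := by
    linear_combination inner
  set t := ‖u‖ with htdef
  set δ := ‖d‖ with hδdef
  have ht0 : 0 ≤ t := norm_nonneg u
  have hδ0 : 0 ≤ δ := norm_nonneg d
  have ht : t ≤ 69/20 := quartic_root_abs_le u hu
  have ht2 : t^2 ≤ (69/20)^2 := by nlinarith
  have ht3 : t^3 ≤ (69/20)^3 := by nlinarith
  have bH : ‖704*u^3 + 840*Complex.I*u^2 + 4704*u - 2976*Complex.I‖
      ≤ 704*t^3 + 840*t^2 + 4704*t + 2976 := by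
    simp only [sub_eq_add_neg]
    refine le_trans (cabs_add₄ _ _ _ _) ?_
    simp only [norm_neg, norm_mul, norm_pow, Complex.norm_I]
    simp [htdef]
  have bK : ‖-192*Complex.I*u^3 + 448*u^2 - 720*Complex.I*u + 64‖
      ≤ 192*t^3 + 448*t^2 + 720*t + 64 := by
    simp only [sub_eq_add_neg]
    refine le_trans (cabs_add₄ _ _ _ _) ?_
    simp only [norm_neg, norm_mul, norm_pow, Complex.norm_I]
    simp [htdef]
  have bB : ‖4*u^3 - 48*Complex.I*u^2 + 144*u - 228*Complex.I‖
      ≤ 4*t^3 + 48*t^2 + 144*t + 228 := by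
    simp only [sub_eq_add_neg]
    refine le_trans (cabs_add₄ _ _ _ _) ?_
    simp only [norm_neg, norm_mul, norm_pow, Complex.norm_I]
    simp [htdef]
  set M : ℂ := (-(704*u^3 + 840*Complex.I*u^2 + 4704*u - 2976*Complex.I)
      + d * (-192*Complex.I*u^3 + 448*u^2 - 720*Complex.I*u + 64)
      - d^2 * (4*u^3 - 48*Complex.I*u^2 + 144*u - 228*Complex.I)) with hM
  have e2 : (688 : ℝ) = δ * ‖M‖ := by
    have h := congrArg (‖·‖) e
    simpa [norm_mul, hδdef] using h
  have bM : ‖M‖ ≤ 58320 := by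
    rw [hM]
    have step : ‖-(704*u^3 + 840*Complex.I*u^2 + 4704*u - 2976*Complex.I)
        + d * (-192*Complex.I*u^3 + 448*u^2 - 720*Complex.I*u + 64)
        - d^2 * (4*u^3 - 48*Complex.I*u^2 + 144*u - 228*Complex.I)‖
        ≤ ‖704*u^3 + 840*Complex.I*u^2 + 4704*u - 2976*Complex.I‖
          + δ * ‖-192*Complex.I*u^3 + 448*u^2 - 720*Complex.I*u + 64‖
          + δ^2 * ‖4*u^3 - 48*Complex.I*u^2 + 144*u - 228*Complex.I‖ := by
      simp only [sub_eq_add_neg]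
      refine le_trans (cabs_add₃ _ _ _) ?_
      simp only [norm_neg, norm_mul, norm_pow, hδdef]
      exact le_refl _
    have hK0 : (0:ℝ) ≤ ‖-192*Complex.I*u^3 + 448*u^2 - 720*Complex.I*u + 64‖ :=
      norm_nonneg _
    have hB0 : (0:ℝ) ≤ ‖4*u^3 - 48*Complex.I*u^2 + 144*u - 228*Complex.I‖ :=
      norm_nonneg _
    have hδ1 : δ ≤ 1 := le_of_lt (lt_trans hcon (by norm_num))
    have hδ117 : δ ≤ 117/10000 := le_of_lt hcon
    have hδsq : δ^2 ≤ 117/10000 := by nlinarith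
    refine le_trans step ?_
    have c1 : ‖704*u^3 + 840*Complex.I*u^2 + 4704*u - 2976*Complex.I‖ ≤ 58112 := by
      refine le_trans bH (by nlinarith)
    have c2 : δ * ‖-192*Complex.I*u^3 + 448*u^2 - 720*Complex.I*u + 64‖
        ≤ (117/10000) * 15765 := by
      have hKle : ‖-192*Complex.I*u^3 + 448*u^2 - 720*Complex.I*u + 64‖ ≤ 15765 := by
        refine le_trans bK (by nlinarith)
      exact mul_le_mul hδ117 hKle hK0 (by norm_num)
    have c3 : δ^2 * ‖4*u^3 - 48*Complex.I*u^2 + 144*u - 228*Complex.I‖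
        ≤ (117/10000) * 1461 := by
      have hBle : ‖4*u^3 - 48*Complex.I*u^2 + 144*u - 228*Complex.I‖ ≤ 1461 := by
        refine le_trans bB (by nlinarith)
      exact mul_le_mul hδsq hBle hB0 (by norm_num)
    nlinarith [c1, c2, c3]
  have : (688 : ℝ) < 688 := by
    calc (688 : ℝ) = δ * ‖M‖ := e2
      _ ≤ δ * 58320 := by
          exact mul_le_mul_of_nonneg_left bM hδ0
      _ < (117/10000) * 58320 := by
          exact mul_lt_mul_of_pos_right hcon (by norm_num)
      _ < 688 := by norm_num
  exact absurd this (lt_irrefl _)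

/-- The center `c(u) = i q̃² + u p̃ q̃ − ((u + i u²)/2) p̃²` of the asymptotic disc
associated with a root `u` of the quartic `u⁴ + 8u² − 12iu − 4 = 0`. -/
noncomputable def discCenter (p' q' : ℤ) (u : ℂ) : ℂ :=
  Complex.I * (q' : ℂ) ^ 2 + u * (p' : ℂ) * (q' : ℂ)
    - ((u + Complex.I * u ^ 2) / 2) * (p' : ℂ) ^ 2

/-- For integers `p̃ ≠ 0`, `q̃ ≥ 97|p̃|` and distinct roots `u ≠ u'` of
`u⁴ + 8u² − 12iu − 4 = 0`, the open discs of radius `51|p̃|³/q̃` centered at `c(u)`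
and `c(u')` are disjoint. -/
theorem stmt_9 (p' q' : ℤ) (hp : p' ≠ 0) (hq : 97 * |p'| ≤ q') (u u' : ℂ)
    (hu : u ^ 4 + 8 * u ^ 2 - 12 * Complex.I * u - 4 = 0)
    (hu' : u' ^ 4 + 8 * u' ^ 2 - 12 * Complex.I * u' - 4 = 0)
    (hne : u ≠ u') :
    ∀ t : ℂ, ¬(‖t - discCenter p' q' u‖ < 51 * |(p' : ℝ)| ^ 3 / (q' : ℝ) ∧
      ‖t - discCenter p' q' u'‖ < 51 * |(p' : ℝ)| ^ 3 / (q' : ℝ)) := by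
  intro t0 ht0
  obtain ⟨h1, h2⟩ := ht0
  set P : ℝ := |(p' : ℝ)| with hP
  have hp1 : (1 : ℝ) ≤ P := by
    rw [hP, ← Int.cast_abs]
    exact_mod_cast Int.one_le_abs hp
  have hqP : 97 * P ≤ (q' : ℝ) := by
    rw [hP, ← Int.cast_abs]
    exact_mod_cast hq
  have hq0 : (0 : ℝ) < (q' : ℝ) := by nlinarith
  have hsep := quartic_root_sep u u' hu hu' hne
  have htu : ‖u‖ ≤ 69/20 := quartic_root_abs_le u hu
  have htu' : ‖u'‖ ≤ 69/20 := quartic_root_abs_le u' hu'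
  have hc : discCenter p' q' u - discCenter p' q' u'
      = (u - u') * ((p' : ℂ) * (q' : ℂ)
          - (1 + Complex.I * (u + u')) / 2 * (p' : ℂ) ^ 2) := by
    unfold discCenter; ring
  have habs_pq : ‖(p' : ℂ) * (q' : ℂ)‖ = P * (q' : ℝ) := by
    rw [norm_mul, Complex.norm_intCast, Complex.norm_intCast, hP, abs_of_pos hq0]
  have habs_w : ‖(1 + Complex.I * (u + u')) / 2 * (p' : ℂ) ^ 2‖
      ≤ (79/20) * P^2 := by
    rw [norm_mul, norm_div, norm_pow, Complex.norm_intCast, ← hP]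
    have h1' : ‖1 + Complex.I * (u + u')‖ ≤ 79/10 := by
      calc ‖1 + Complex.I * (u + u')‖
          ≤ ‖1‖ + ‖Complex.I * (u + u')‖ := norm_add_le _ _
        _ ≤ 1 + (‖u‖ + ‖u'‖) := by
            rw [norm_one, norm_mul, Complex.norm_I, one_mul]
            gcongr; exact norm_add_le _ _
        _ ≤ 79/10 := by linarith
    have hP2 : (0:ℝ) ≤ P^2 := sq_nonneg _
    calc ‖1 + Complex.I * (u + u')‖ / ‖(2:ℂ)‖ * P^2
        ≤ (79/10) / 2 * P^2 := by
          rw [Complex.norm_two]; gcongr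
      _ = (79/20) * P^2 := by ring
  have hfac : P * (q' : ℝ) - (79/20) * P^2
      ≤ ‖(p' : ℂ) * (q' : ℂ)
          - (1 + Complex.I * (u + u')) / 2 * (p' : ℂ) ^ 2‖ := by
    have hts := norm_sub_norm_le ((p' : ℂ) * (q' : ℂ))
      ((1 + Complex.I * (u + u')) / 2 * (p' : ℂ) ^ 2)
    rw [habs_pq] at hts
    linarith
  have hdist : 102 * P^3 / (q' : ℝ)
      ≤ ‖discCenter p' q' u - discCenter p' q' u'‖ := by
    rw [hc, norm_mul]
    have hF0 : (0:ℝ) ≤ P * (q' : ℝ) - (79/20) * P^2 := by nlinarith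
    have step : (117/10000) * (P * (q' : ℝ) - (79/20) * P^2)
        ≤ ‖u - u'‖ * ‖(p' : ℂ) * (q' : ℂ)
            - (1 + Complex.I * (u + u')) / 2 * (p' : ℂ) ^ 2‖ :=
      mul_le_mul hsep hfac hF0 (norm_nonneg _)
    refine le_trans ?_ step
    rw [div_le_iff₀ hq0]
    nlinarith [mul_nonneg (sub_nonneg.mpr hqP) (sub_nonneg.mpr hqP),
      mul_nonneg (mul_nonneg (sub_nonneg.mpr hqP) (sub_nonneg.mpr hqP))
        (by positivity : (0:ℝ) ≤ P),
      sq_nonneg P]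
  have htri : ‖discCenter p' q' u - discCenter p' q' u'‖
      ≤ ‖t0 - discCenter p' q' u‖ + ‖t0 - discCenter p' q' u'‖ := by
    have hrw : discCenter p' q' u - discCenter p' q' u'
        = -(t0 - discCenter p' q' u) + (t0 - discCenter p' q' u') := by ring
    rw [hrw]
    refine le_trans (norm_add_le _ _) ?_
    rw [norm_neg]
  have hhalf : 102 * P^3 / (q' : ℝ) = 51 * P^3 / (q' : ℝ) + 51 * P^3 / (q' : ℝ) := by ring
  linarith [hdist, htri, h1, h2]
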